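/- arXiv:2304.09509 — 2 statements merged into one kernel-verified Lean document; each statement's English description precedes it below -/
import Mathlib

section
/- Let F : ℝⁿ × P(ℝⁿ) → ℝ be bounded, continuous in x for each μ and weakly continuous in μ for each x; set c(μ) := inf_{z∈ℝⁿ} F(z,μ) and C_F := sup_{z,μ} (F(z,μ) − c(μ)). Let 𝒜 ⊆ ℝⁿ be nonempty and closed with F(a,μ) = c(μ) for every a ∈ 𝒜 and μ ∈ P(ℝⁿ). Let T > 0, let m : [0,T] → P(ℝⁿ) be narrowly continuous, fix x ∈ ℝⁿ, and let y* : [0,T] → ℝⁿ be a minimizer of ∫_0^T ( |ẏ(s)|²/2 + F(y(s), m(s)) ) ds among locally Lipschitz curves y with y(0) = x. For δ > 0 set 𝒜_δ := {z ∈ ℝⁿ : there exists μ ∈ P(ℝⁿ) with F(z,μ) − c(μ) < δ}. Then the Lebesgue measure of {s ∈ [0,T] : y*(s) ∉ 𝒜_δ} is at most (1/2 + C_F)·dist(x,𝒜)/δ. -/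
open MeasureTheory Set Filter Metric Topology

noncomputable section

abbrev En (n : ℕ) : Type := EuclideanSpace ℝ (Fin n)
abbrev Pn (n : ℕ) : Type := MeasureTheory.ProbabilityMeasure (En n)

/-- Action functional on the time interval `[t,T]`. -/
def action {n : ℕ} (F : En n → Pn n → ℝ) (m : ℝ → Pn n) (t T : ℝ) (y : ℝ → En n) : ℝ :=
  ∫ s in t..T, (‖deriv y s‖ ^ 2 / 2 + F (y s) (m s))

/-- Admissible curves on `[t,T]` starting at `x`. -/
def Adm {n : ℕ} (t T : ℝ) (x : En n) (y : ℝ → En n) : Prop :=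
  (∃ L : NNReal, LipschitzOnWith L y (Set.Icc t T)) ∧ y t = x

/-- `cmin F μ` is the infimum of `F (·, μ)`. -/
def cmin {n : ℕ} (F : En n → Pn n → ℝ) (μ : Pn n) : ℝ := ⨅ z : En n, F z μ

/-- Discretization map. -/
def theta (k : ℕ) (s : ℝ) : ℝ := max 0 ((⌊((k:ℝ)+1) * s⌋ : ℝ) / ((k:ℝ)+1))

lemma theta_mem {T : ℝ} (k : ℕ) {s : ℝ} (hs : s ∈ Icc 0 T) : theta k s ∈ Icc 0 T := by
  have hk : (0:ℝ) < (k:ℝ)+1 := by positivity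
  constructor
  · exact le_max_left _ _
  · have h1 : ((⌊((k:ℝ)+1) * s⌋ : ℝ)) ≤ ((k:ℝ)+1) * s := Int.floor_le _
    have h2 : ((⌊((k:ℝ)+1) * s⌋ : ℝ) / ((k:ℝ)+1)) ≤ s := by
      rw [div_le_iff₀ hk]; linarith [h1]
    have := hs.1
    have := hs.2
    simp only [theta, max_le_iff]
    constructor <;> linarith

lemma theta_tendsto {T : ℝ} {s : ℝ} (hs : s ∈ Icc 0 T) :
    Tendsto (fun k => theta k s) atTop (𝓝[Icc 0 T] s) := by
  apply tendsto_nhdsWithin_of_tendsto_nhds_of_eventually_within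
  · have hle : ∀ k : ℕ, theta k s ≤ s := by
      intro k
      have hk : (0:ℝ) < (k:ℝ)+1 := by positivity
      have h2 : ((⌊((k:ℝ)+1) * s⌋ : ℝ) / ((k:ℝ)+1)) ≤ s := by
        rw [div_le_iff₀ hk]; linarith [Int.floor_le (((k:ℝ)+1) * s)]
      simpa [theta, max_le_iff] using ⟨hs.1, h2⟩
    have hge : ∀ k : ℕ, s - 1/((k:ℝ)+1) ≤ theta k s := by
      intro k
      have hk : (0:ℝ) < (k:ℝ)+1 := by positivity
      have h1 : ((k:ℝ)+1) * s - 1 < (⌊((k:ℝ)+1) * s⌋ : ℝ) := Int.sub_one_lt_floor _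
      have h2 : s - 1/((k:ℝ)+1) ≤ ((⌊((k:ℝ)+1) * s⌋ : ℝ) / ((k:ℝ)+1)) := by
        rw [le_div_iff₀ hk]
        have hone : (1/((k:ℝ)+1)) * ((k:ℝ)+1) = 1 := by field_simp
        nlinarith [h1]
      exact h2.trans (le_max_right _ _)
    have h0 : Tendsto (fun k : ℕ => s - 1/((k:ℝ)+1)) atTop (𝓝 s) := by
      have := tendsto_one_div_add_atTop_nhds_zero_nat (𝕜 := ℝ)
      have := ((tendsto_const_nhds : Tendsto (fun _ : ℕ => s) atTop (𝓝 s)).sub this)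
      simpa using this
    exact tendsto_of_tendsto_of_tendsto_of_le_of_le h0 tendsto_const_nhds hge hle
  · exact Eventually.of_forall fun k => theta_mem k hs

lemma measurable_theta (k : ℕ) : Measurable (theta k) := by
  apply Measurable.max measurable_const
  exact (measurable_from_top.comp ((measurable_const.mul measurable_id).floor)).div_const _

lemma aemeas_comp {n : ℕ} (F : En n → Pn n → ℝ)
    (hFx : ∀ μ : Pn n, Continuous fun x => F x μ)
    (hFm : ∀ x : En n, Continuous fun μ : Pn n => F x μ)
    {T : ℝ} (m : ℝ → Pn n) (hm : ContinuousOn m (Icc 0 T))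
    (y : ℝ → En n) (hy : ContinuousOn y (Icc 0 T)) :
    AEMeasurable (fun s => F (y s) (m s)) (volume.restrict (Icc 0 T)) := by
  set μI : Measure ℝ := volume.restrict (Icc 0 T) with hμI
  set g : ℕ → ℝ → ℝ := fun k s => F (y s) (m (theta k s)) with hg
  have hgk : ∀ k, AEMeasurable (g k) μI := by
    intro k
    have hcover : (⋃ j : ℤ, {s : ℝ | (⌊((k:ℝ)+1) * s⌋ : ℤ) = j}) = univ := by
      ext s; simp
    have hSj : ∀ j : ℤ, MeasurableSet {s : ℝ | (⌊((k:ℝ)+1) * s⌋ : ℤ) = j} := by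
      intro j
      exact ((measurable_const.mul measurable_id).floor) (measurableSet_singleton j)
    have hpiece : ∀ j : ℤ, AEMeasurable (g k) (μI.restrict {s : ℝ | (⌊((k:ℝ)+1) * s⌋ : ℤ) = j}) := by
      intro j
      have hval : ∀ s ∈ {s : ℝ | (⌊((k:ℝ)+1) * s⌋ : ℤ) = j}, theta k s = max 0 ((j:ℝ)/((k:ℝ)+1)) := by
        intro s hs
        simp only [mem_setOf_eq] at hs
        simp [theta, hs]
      set v : ℝ := max 0 ((j:ℝ)/((k:ℝ)+1)) with hv
      have hφ : AEMeasurable (fun s => F (y s) (m v)) μI :=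
        ((hFx (m v)).comp_continuousOn hy).aemeasurable measurableSet_Icc
      have hφ' : AEMeasurable (fun s => F (y s) (m v))
          (μI.restrict {s : ℝ | (⌊((k:ℝ)+1) * s⌋ : ℤ) = j}) :=
        hφ.mono_measure (Measure.restrict_le_self)
      refine hφ'.congr ?_
      refine (ae_restrict_iff' (hSj j)).2 (Eventually.of_forall fun s hs => ?_)
      simp only [hg]
      rw [hval s hs]
    have := aemeasurable_iUnion_iff.mpr hpiece
    rwa [hcover, Measure.restrict_univ] at this
  refine aemeasurable_of_tendsto_metrizable_ae atTop hgk ?_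
  have hmem : ∀ᵐ s ∂μI, s ∈ Icc 0 T := ae_restrict_mem measurableSet_Icc
  filter_upwards [hmem] with s hs
  have h1 : Tendsto (fun k => m (theta k s)) atTop (𝓝 (m s)) :=
    (hm s hs).tendsto.comp (theta_tendsto hs)
  exact ((hFm (y s)).continuousAt.tendsto.comp h1 : _)

lemma abs_min_sub_min_le (s t c : ℝ) : |min s c - min t c| ≤ |s - t| := by
  have ha := le_abs_self (s - t)
  have hb := neg_abs_le (s - t)
  rw [abs_le]
  rcases le_total s c with h1|h1 <;> rcases le_total t c with h2|h2 <;>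
      simp only [min_eq_left, min_eq_right, h1, h2] <;> constructor <;> linarith

set_option maxHeartbeats 1000000 in
/-- **Occupational measure estimate.** Let `y*` minimize the action on `[0,T]` among admissible
curves from `x`, and for `δ > 0` let `𝒜_δ = {z | ∃ μ, F(z,μ) − c(μ) < δ}`. Then the Lebesgue
measure of `{s ∈ [0,T] : y*(s) ∉ 𝒜_δ}` is at most `(1/2 + C_F)·dist(x,𝒜)/δ`. -/
theorem occupational_measure_estimate {n : ℕ} (F : En n → Pn n → ℝ)
    (M : ℝ) (hM : ∀ (x : En n) (μ : Pn n), |F x μ| ≤ M)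
    (hFx : ∀ μ : Pn n, Continuous fun x => F x μ)
    (hFm : ∀ x : En n, Continuous fun μ : Pn n => F x μ)
    (C_F : ℝ) (hCF : ∀ (z : En n) (μ : Pn n), F z μ - cmin F μ ≤ C_F)
    (𝒜 : Set (En n)) (hA_ne : 𝒜.Nonempty) (hA_closed : IsClosed 𝒜)
    (hA_min : ∀ a ∈ 𝒜, ∀ μ : Pn n, F a μ = cmin F μ)
    (T : ℝ) (hT : 0 < T)
    (m : ℝ → Pn n) (hm : ContinuousOn m (Set.Icc 0 T))
    (x : En n) (ystar : ℝ → En n)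
    (hadm : Adm 0 T x ystar)
    (hmin : ∀ y : ℝ → En n, Adm 0 T x y → action F m 0 T ystar ≤ action F m 0 T y)
    (δ : ℝ) (hδ : 0 < δ) :
    MeasureTheory.volume
        {s : ℝ | s ∈ Set.Icc (0:ℝ) T ∧ ystar s ∉ {z : En n | ∃ μ : Pn n, F z μ - cmin F μ < δ}}
      ≤ ENNReal.ofReal ((1/2 + C_F) * Metric.infDist x 𝒜 / δ) := by
  classical
  obtain ⟨a0⟩ : Nonempty (En n) := inferInstance
  set μ0 : Pn n := ⟨Measure.dirac a0, inferInstance⟩ with hμ0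
  have hcle : ∀ (z : En n) (μ : Pn n), cmin F μ ≤ F z μ := by
    intro z μ
    refine ciInf_le ⟨-M, ?_⟩ z
    rintro _ ⟨w, rfl⟩
    linarith [(abs_le.1 (hM w μ)).1]
  set Aδ : Set (En n) := {z : En n | ∃ μ : Pn n, F z μ - cmin F μ < δ} with hAδ
  set B : Set ℝ := {s : ℝ | s ∈ Set.Icc (0:ℝ) T ∧ ystar s ∉ Aδ} with hBdef
  show volume B ≤ ENNReal.ofReal ((1/2 + C_F) * Metric.infDist x 𝒜 / δ)
  obtain ⟨a, haA, had⟩ := hA_closed.exists_infDist_eq_dist hA_ne x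
  set d : ℝ := infDist x 𝒜 with hd
  have hd0 : 0 ≤ d := infDist_nonneg
  have hCF0 : 0 ≤ C_F := by
    have h1 := hCF a μ0
    rw [hA_min a haA μ0] at h1
    linarith
  by_cases hδC : C_F < δ
  · have hBempty : B = ∅ := by
      ext s
      simp only [hBdef, mem_setOf_eq, mem_empty_iff_false, iff_false, not_and, not_not]
      intro _
      exact ⟨μ0, lt_of_le_of_lt (hCF _ μ0) hδC⟩
    rw [hBempty]
    simp
  push_neg at hδC
  have hAopen : IsOpen Aδ := by
    have h : Aδ = ⋃ μ : Pn n, {z : En n | F z μ - cmin F μ < δ} := by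
      ext z; simp [hAδ]
    rw [h]
    exact isOpen_iUnion fun μ => isOpen_lt ((hFx μ).sub continuous_const) continuous_const
  obtain ⟨⟨L, hLip⟩, hy0star⟩ := hadm
  have hyc : ContinuousOn ystar (Icc 0 T) := hLip.continuousOn
  have hBmeas : MeasurableSet B := by
    have h : B = Icc 0 T ∩ ystar ⁻¹' Aδᶜ := by
      ext s; simp [hBdef, mem_inter_iff, and_comm]
    rw [h]
    exact (hyc.preimage_isClosed_of_isClosed isClosed_Icc hAopen.isClosed_compl).measurableSet
  have hBsub : B ⊆ Icc 0 T := fun s hs => hs.1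
  have hBfin : volume B ≠ ⊤ :=
    ((measure_mono hBsub).trans_lt (by rw [Real.volume_Icc]; exact ENNReal.ofReal_lt_top)).ne
  by_cases hdT : T ≤ d
  · refine (measure_mono hBsub).trans ?_
    rw [Real.volume_Icc]
    apply ENNReal.ofReal_le_ofReal
    rw [sub_zero, le_div_iff₀ hδ]
    nlinarith
  push_neg at hdT
  -- main case : d < T
  have haxnorm : ‖a - x‖ = d := by
    rw [← dist_eq_norm, dist_comm, ← had]
  set y : ℝ → En n := fun s => x + ((min s d)/d) • (a - x) with hy
  have hy0 : y 0 = x := by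
    simp [hy, min_eq_left hd0]
  have hyafter : ∀ s : ℝ, d ≤ s → y s = a := by
    intro s hs
    rcases eq_or_lt_of_le hd0 with h0|h0
    · have hax : a = x := by
        have hda : dist x a = 0 := by rw [← had, ← h0]
        exact (dist_eq_zero.1 hda).symm
      simp [hy, hax]
    · simp only [hy, min_eq_right hs, div_self h0.ne']
      rw [one_smul]
      abel
  have hysub : ∀ s t : ℝ, y s - y t = ((min s d - min t d)/d) • (a - x) := by
    intro s t
    simp only [hy]
    rw [add_sub_add_left_eq_sub, ← sub_smul, ← sub_div]
  have hlip1 : LipschitzWith 1 y := by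
    apply LipschitzWith.of_dist_le_mul
    intro s t
    rw [dist_eq_norm, hysub s t, norm_smul, Real.norm_eq_abs, haxnorm]
    rcases eq_or_lt_of_le hd0 with h0|h0
    · rw [← h0]
      simp only [mul_zero, NNReal.coe_one, one_mul]
      exact dist_nonneg
    · rw [abs_div, abs_of_pos h0, div_mul_cancel₀ _ h0.ne']
      simp only [NNReal.coe_one, one_mul, Real.dist_eq]
      exact abs_min_sub_min_le s t d
  have hycont : Continuous y := hlip1.continuous
  have hadm2 : Adm 0 T x y := ⟨⟨1, hlip1.lipschitzOnWith⟩, hy0⟩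
  -- derivative of the competitor
  have hderiv_lt : ∀ s : ℝ, s < d → deriv y s = (1/d) • (a - x) := by
    intro s hs
    have hev : y =ᶠ[𝓝 s] fun u => x + (u/d) • (a - x) := by
      filter_upwards [Iio_mem_nhds hs] with u hu
      simp [hy, min_eq_left (mem_Iio.1 hu).le]
    rw [hev.deriv_eq]
    have h1 : HasDerivAt (fun u : ℝ => u/d) (1/d) s := by
      simpa using (hasDerivAt_id s).div_const d
    exact ((h1.smul_const (a - x)).const_add x).deriv
  have hderiv_gt : ∀ s : ℝ, d < s → deriv y s = 0 := by
    intro s hs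
    have hev : y =ᶠ[𝓝 s] fun _ => a := by
      filter_upwards [Ioi_mem_nhds hs] with u hu
      exact hyafter u (mem_Ioi.1 hu).le
    rw [hev.deriv_eq, deriv_const]
  have hKy : ∀ s : ℝ, s ≠ d → ‖deriv y s‖ ≤ 1 := by
    intro s hs
    rcases lt_or_gt_of_ne hs with h|h
    · rw [hderiv_lt s h, norm_smul, Real.norm_eq_abs, haxnorm]
      rcases eq_or_lt_of_le hd0 with h0|h0
      · rw [← h0]; norm_num
      · rw [abs_of_pos (by positivity : (0:ℝ) < 1/d), div_mul_cancel₀ _ h0.ne']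
    · rw [hderiv_gt s h]; simp
  -- integrability
  haveI : IsFiniteMeasure (volume.restrict (Ioc (0:ℝ) T)) := by
    constructor
    rw [Measure.restrict_apply_univ, Real.volume_Ioc]
    exact ENNReal.ofReal_lt_top
  have hres : volume.restrict (Ioc (0:ℝ) T) ≤ volume.restrict (Icc (0:ℝ) T) :=
    Measure.restrict_mono Ioc_subset_Icc_self le_rfl
  have haeIoo : ∀ᵐ s ∂volume.restrict (Ioc (0:ℝ) T), s ∈ Ioo 0 T := by
    have h1 : ∀ᵐ s : ℝ ∂volume, s ≠ T := by
      rw [ae_iff]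
      have h2 : {s : ℝ | ¬ s ≠ T} = {T} := by ext u; simp
      rw [h2]
      exact measure_singleton T
    refine (ae_restrict_iff' measurableSet_Ioc).2 ?_
    filter_upwards [h1] with s hsne hsIoc
    exact ⟨hsIoc.1, lt_of_le_of_ne hsIoc.2 hsne⟩
  have haened : ∀ᵐ s ∂volume.restrict (Ioc (0:ℝ) T), s ≠ d := by
    refine ae_restrict_of_ae ?_
    rw [ae_iff]
    have h2 : {s : ℝ | ¬ s ≠ d} = {d} := by ext u; simp
    rw [h2]
    exact measure_singleton d
  have haeIoc : ∀ᵐ s ∂volume.restrict (Ioc (0:ℝ) T), s ∈ Ioc 0 T :=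
    ae_restrict_mem measurableSet_Ioc
  have hgstar_int : Integrable (fun s => ‖deriv ystar s‖ ^ 2 / 2 + F (ystar s) (m s))
      (volume.restrict (Ioc (0:ℝ) T)) := by
    have hmeas : AEMeasurable (fun s => ‖deriv ystar s‖ ^ 2 / 2 + F (ystar s) (m s))
        (volume.restrict (Ioc (0:ℝ) T)) := by
      refine AEMeasurable.add ?_ ?_
      · exact (((measurable_deriv ystar).norm.pow_const 2).div_const 2).aemeasurable
      · exact (aemeas_comp F hFx hFm m hm ystar hyc).mono_measure hres
    refine Integrable.mono' (integrable_const ((L:ℝ)^2/2 + M)) hmeas.aestronglyMeasurable ?_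
    filter_upwards [haeIoo] with s hs
    have hds : ‖deriv ystar s‖ ≤ (L:ℝ) := by
      have hnb : Icc (0:ℝ) T ∈ 𝓝 s := Icc_mem_nhds hs.1 hs.2
      have h1 : ‖fderiv ℝ ystar s‖ ≤ (L:ℝ) := norm_fderiv_le_of_lipschitzOn ℝ hnb hLip
      calc ‖deriv ystar s‖ = ‖fderiv ℝ ystar s 1‖ := by rw [fderiv_apply_one_eq_deriv]
        _ ≤ ‖fderiv ℝ ystar s‖ * ‖(1:ℝ)‖ := ContinuousLinearMap.le_opNorm _ _
        _ ≤ (L:ℝ) := by rw [norm_one, mul_one]; exact h1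
    have h2 : ‖deriv ystar s‖ ^ 2 ≤ (L:ℝ)^2 := by
      have := norm_nonneg (deriv ystar s)
      nlinarith
    have h3 := abs_le.1 (hM (ystar s) (m s))
    rw [Real.norm_eq_abs, abs_le]
    constructor <;> nlinarith [norm_nonneg (deriv ystar s), sq_nonneg (‖deriv ystar s‖)]
  have hgc_int : Integrable (fun s => ‖deriv y s‖ ^ 2 / 2 + F (y s) (m s))
      (volume.restrict (Ioc (0:ℝ) T)) := by
    have hmeas : AEMeasurable (fun s => ‖deriv y s‖ ^ 2 / 2 + F (y s) (m s))
        (volume.restrict (Ioc (0:ℝ) T)) := by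
      refine AEMeasurable.add ?_ ?_
      · exact (((measurable_deriv y).norm.pow_const 2).div_const 2).aemeasurable
      · exact (aemeas_comp F hFx hFm m hm y hycont.continuousOn).mono_measure hres
    refine Integrable.mono' (integrable_const ((1:ℝ)^2/2 + M)) hmeas.aestronglyMeasurable ?_
    filter_upwards [haened] with s hs
    have hds : ‖deriv y s‖ ≤ 1 := hKy s hs
    have h2 : ‖deriv y s‖ ^ 2 ≤ (1:ℝ)^2 := by
      have := norm_nonneg (deriv y s)
      nlinarith
    have h3 := abs_le.1 (hM (y s) (m s))
    rw [Real.norm_eq_abs, abs_le]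
    constructor <;> nlinarith [norm_nonneg (deriv y s), sq_nonneg (‖deriv y s‖)]
  -- minimality
  have hact := hmin y hadm2
  simp only [action] at hact
  rw [intervalIntegral.integral_of_le hT.le, intervalIntegral.integral_of_le hT.le] at hact
  have h0le : 0 ≤ ∫ s in Ioc (0:ℝ) T,
      ((‖deriv y s‖ ^ 2 / 2 + F (y s) (m s)) - (‖deriv ystar s‖ ^ 2 / 2 + F (ystar s) (m s))) := by
    rw [integral_sub hgc_int hgstar_int]
    linarith
  -- pointwise bound
  set φ : ℝ → ℝ := fun s =>
    (Ioc (0:ℝ) d).indicator (fun _ => 1/2 + C_F) s - B.indicator (fun _ => δ) s with hφ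
  have hφint : Integrable φ (volume.restrict (Ioc (0:ℝ) T)) :=
    ((integrable_const _).indicator measurableSet_Ioc).sub ((integrable_const _).indicator hBmeas)
  have hptwise : ∀ᵐ s ∂volume.restrict (Ioc (0:ℝ) T),
      ((‖deriv y s‖ ^ 2 / 2 + F (y s) (m s)) - (‖deriv ystar s‖ ^ 2 / 2 + F (ystar s) (m s)))
        ≤ φ s := by
    filter_upwards [haeIoc, haened] with s hsIoc hsd
    have hc1 : cmin F (m s) ≤ F (ystar s) (m s) := hcle _ _
    have hKstar : (0:ℝ) ≤ ‖deriv ystar s‖ ^ 2 / 2 := by positivity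
    have hBval : B.indicator (fun _ => δ) s ≤ F (ystar s) (m s) - cmin F (m s) := by
      by_cases hsB : s ∈ B
      · rw [indicator_of_mem hsB]
        have h3 : ¬ (F (ystar s) (m s) - cmin F (m s) < δ) := fun hcon => hsB.2 ⟨m s, hcon⟩
        linarith [not_lt.1 h3]
      · rw [indicator_of_notMem hsB]; linarith
    rcases lt_or_gt_of_ne hsd with hlt | hgt
    · have hker : ‖deriv y s‖ ^ 2 / 2 ≤ 1/2 := by
        have h1 : ‖deriv y s‖ ≤ 1 := hKy s hsd
        have h2 := norm_nonneg (deriv y s)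
        nlinarith
      have hind1 : (Ioc (0:ℝ) d).indicator (fun _ => (1:ℝ)/2 + C_F) s = 1/2 + C_F :=
        Set.indicator_of_mem (show s ∈ Ioc (0:ℝ) d from ⟨hsIoc.1, hlt.le⟩) _
      have hFyc : F (y s) (m s) - cmin F (m s) ≤ C_F := hCF _ _
      simp only [hφ, hind1]
      linarith
    · have hy_a : y s = a := hyafter s hgt.le
      have hFa : F (y s) (m s) = cmin F (m s) := by rw [hy_a]; exact hA_min a haA (m s)
      have hK0 : ‖deriv y s‖ ^ 2 / 2 = 0 := by rw [hderiv_gt s hgt]; simp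
      have hind1 : (Ioc (0:ℝ) d).indicator (fun _ => (1:ℝ)/2 + C_F) s = 0 :=
        indicator_of_notMem (fun hc => absurd hc.2 (not_le.2 hgt)) _
      simp only [hφ, hind1]
      linarith
  have hineq2 : (∫ s in Ioc (0:ℝ) T,
      ((‖deriv y s‖ ^ 2 / 2 + F (y s) (m s)) - (‖deriv ystar s‖ ^ 2 / 2 + F (ystar s) (m s))))
        ≤ ∫ s in Ioc (0:ℝ) T, φ s :=
    integral_mono_ae (hgc_int.sub hgstar_int) hφint hptwise
  -- compute ∫ φ
  have hφval : (∫ s in Ioc (0:ℝ) T, φ s) = (1/2 + C_F) * d - δ * (volume B).toReal := by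
    simp only [hφ]
    rw [integral_sub ((integrable_const _).indicator measurableSet_Ioc)
      ((integrable_const _).indicator hBmeas)]
    rw [integral_indicator measurableSet_Ioc, integral_indicator hBmeas]
    rw [Measure.restrict_restrict measurableSet_Ioc, Measure.restrict_restrict hBmeas]
    have h1 : Ioc (0:ℝ) d ∩ Ioc 0 T = Ioc 0 d := by
      rw [Ioc_inter_Ioc]
      simp [min_eq_left hdT.le]
    have h2 : volume (B ∩ Ioc 0 T) = volume B := by
      apply le_antisymm (measure_mono inter_subset_left)
      have hsub2 : B ⊆ (B ∩ Ioc 0 T) ∪ {0} := by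
        intro s hs
        rcases eq_or_ne s 0 with rfl|hne
        · right; simp
        · left; exact ⟨hs, ⟨lt_of_le_of_ne hs.1.1 (Ne.symm hne), hs.1.2⟩⟩
      calc volume B ≤ volume ((B ∩ Ioc 0 T) ∪ {0}) := measure_mono hsub2
        _ ≤ volume (B ∩ Ioc 0 T) + volume {0} := measure_union_le _ _
        _ = volume (B ∩ Ioc 0 T) := by simp
    rw [h1, setIntegral_const, setIntegral_const, measureReal_def, measureReal_def, h2, Real.volume_Ioc, sub_zero,
      ENNReal.toReal_ofReal hd0, smul_eq_mul, smul_eq_mul]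
    ring
  have hfinal : δ * (volume B).toReal ≤ (1/2 + C_F) * d := by
    have := h0le.trans hineq2
    rw [hφval] at this
    linarith
  rw [← ENNReal.ofReal_toReal hBfin]
  apply ENNReal.ofReal_le_ofReal
  rw [le_div_iff₀ hδ]
  linarith
end
end

section
/- Under the standing assumptions (bounded F continuous in each variable, a common minimizing set 𝒜 with argmin_z F(z,μ) = 𝒜 for every μ, the lower bound F(z,μ) − c(μ) ≥ γ(r) whenever dist(z,𝒜) > r, and equilibria (m^T, Φ^T) for each T > 1 with uniformly χ'-Lipschitz optimal trajectories), for every s₀ ∈ (0,1]: lim_{T→∞} sup_{s ∈ [s₀,1]} sup_{x ∈ supp(m^T(sT))} dist(x, 𝒜) = 0, and dist(Φ^T(x, sT), 𝒜) → 0 as T → ∞ uniformly for x ∈ K₀ and s ∈ [s₀,1]. -/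
open MeasureTheory Set Filter Metric

noncomputable section

/-- Support of a probability measure. -/
def msupp {n : ℕ} (μ : Pn n) : Set (En n) := {x | ∀ U ∈ nhds x, μ.toMeasure U ≠ 0}

/-- A Lagrangian equilibrium of the finite-horizon mean field game. -/
def IsEquilibrium {n : ℕ} (F : En n → Pn n → ℝ) (K₀ : Set (En n)) (m₀ : Pn n) (T : ℝ)
    (m : ℝ → Pn n) (Φ : En n → ℝ → En n) : Prop :=
  ContinuousOn m (Set.Icc 0 T) ∧
  (∀ x ∈ K₀, Adm 0 T x (Φ x) ∧
    ∀ y : ℝ → En n, Adm 0 T x y → action F m 0 T (Φ x) ≤ action F m 0 T y) ∧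
  (∀ s ∈ Set.Icc (0:ℝ) T,
    (m s : Measure (En n)) = Measure.map (fun x => Φ x s) (m₀ : Measure (En n)))

/-! ### Auxiliary lemmas -/

open Topology

lemma aemeasurable_F_curve {n : ℕ} (F : En n → Pn n → ℝ)
    (hFx : ∀ μ : Pn n, Continuous fun x => F x μ)
    (hFm : ∀ x : En n, Continuous fun μ : Pn n => F x μ)
    {s : Set ℝ} (hs : MeasurableSet s) {y : ℝ → En n} {w : ℝ → Pn n}
    (hy : ContinuousOn y s) (hw : ContinuousOn w s) :
    AEMeasurable (fun u => F (y u) (w u)) (volume.restrict s) := by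
  classical
  obtain ⟨d, hd⟩ := TopologicalSpace.exists_dense_seq (En n)
  have hex : ∀ (k : ℕ) (x : En n), ∃ i, dist x (d i) < 1 / (k + 1 : ℝ) := fun k x =>
    hd.exists_dist_lt x (by positivity)
  have midx : ∀ k, Measurable (fun x : En n => Nat.find (hex k x)) := by
    intro k
    apply measurable_find
    intro i
    have : {x : En n | dist x (d i) < 1 / (k + 1 : ℝ)} = Metric.ball (d i) (1 / (k + 1 : ℝ)) := by
      ext x; simp [Metric.mem_ball]
    rw [this]
    exact measurableSet_ball
  set fk : ℕ → ℝ → ℝ := fun k u => F (d (Nat.find (hex k (y u)))) (w u) with hfk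
  have hconv : ∀ u, Tendsto (fun k => fk k u) atTop (𝓝 (F (y u) (w u))) := by
    intro u
    have h1 : Tendsto (fun k => d (Nat.find (hex k (y u)))) atTop (𝓝 (y u)) := by
      rw [tendsto_iff_dist_tendsto_zero]
      apply squeeze_zero (fun k => dist_nonneg) (g := fun k : ℕ => 1 / (k + 1 : ℝ))
        (fun k => ?_) tendsto_one_div_add_atTop_nhds_zero_nat
      rw [dist_comm]
      exact (Nat.find_spec (hex k (y u))).le
    exact ((hFx (w u)).tendsto (y u)).comp h1
  have hklm : ∀ k, AEMeasurable (fk k) (volume.restrict s) := by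
    intro k
    have hyae : AEMeasurable y (volume.restrict s) := hy.aemeasurable hs
    have hj : AEMeasurable (fun u => Nat.find (hex k (y u))) (volume.restrict s) :=
      (midx k).comp_aemeasurable hyae
    have hH : ∀ i : ℕ, AEMeasurable (fun u => F (d i) (w u)) (volume.restrict s) :=
      fun i => ((hFm (d i)).comp_continuousOn hw).aemeasurable hs
    have hch : ∀ i : ℕ, ∃ g : ℝ → ℝ, Measurable g ∧
        (fun u => F (d i) (w u)) =ᵐ[volume.restrict s] g :=
      fun i => ⟨(hH i).mk _, (hH i).measurable_mk, (hH i).ae_eq_mk⟩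
    choose H' hH'm hH'ae using hch
    set j' : ℝ → ℕ := hj.mk _ with hj'
    have hmeas2 : Measurable (fun p : ℝ × ℕ => H' p.2 p.1) :=
      measurable_from_prod_countable_left (fun i : ℕ => hH'm i)
    refine ⟨fun u => H' (j' u) u, hmeas2.comp (measurable_id.prodMk hj.measurable_mk), ?_⟩
    filter_upwards [hj.ae_eq_mk, ae_all_iff.2 fun i : ℕ => hH'ae i] with u h1 h2
    calc fk k u = F (d (Nat.find (hex k (y u)))) (w u) := rfl
      _ = F (d (j' u)) (w u) := by rw [hj', ← h1]
      _ = H' (j' u) u := h2 (j' u)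
  exact aemeasurable_of_tendsto_metrizable_ae' hklm (ae_of_all _ hconv)

/-- Straight segment from `p` (at time `t`) to `q` (at time `t+τ`), constant outside. -/
def seg {n : ℕ} (p q : En n) (t τ : ℝ) : ℝ → En n :=
  fun u => p + (min (max ((u - t) / τ) 0) 1) • (q - p)

lemma seg_of_le {n : ℕ} {p q : En n} {t τ : ℝ} (hτ : 0 < τ) {u : ℝ} (hu : u ≤ t) :
    seg p q t τ u = p := by
  have h1 : (u - t) / τ ≤ 0 := by
    apply div_nonpos_iff.2
    right
    constructor <;> linarith
  simp [seg, max_eq_right h1]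

lemma seg_of_ge {n : ℕ} {p q : En n} {t τ : ℝ} (hτ : 0 < τ) {u : ℝ} (hu : t + τ ≤ u) :
    seg p q t τ u = q := by
  have h1 : (1:ℝ) ≤ (u - t) / τ := (le_div_iff₀ hτ).2 (by linarith)
  rw [seg, max_eq_left (by linarith), min_eq_right h1, one_smul, add_sub_cancel]

lemma clamp_lipschitz (t τ : ℝ) (hτ : 0 < τ) :
    LipschitzWith (Real.toNNReal τ⁻¹) (fun u : ℝ => min (max ((u - t) / τ) 0) 1) := by
  have hbase : LipschitzWith (Real.toNNReal τ⁻¹) (fun u : ℝ => (u - t) / τ) := by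
    apply LipschitzWith.of_dist_le_mul
    intro u v
    rw [Real.coe_toNNReal _ (by positivity), Real.dist_eq, Real.dist_eq]
    rw [div_sub_div_same, abs_div, abs_of_pos hτ,
      show u - t - (v - t) = u - v by ring, div_eq_inv_mul]
  exact (hbase.max_const 0).min_const 1

lemma seg_lipschitz {n : ℕ} (p q : En n) (t τ : ℝ) (hτ : 0 < τ) :
    LipschitzWith (Real.toNNReal (dist p q / τ)) (seg p q t τ) := by
  apply LipschitzWith.of_dist_le_mul
  intro u v
  have hcl := (clamp_lipschitz t τ hτ).dist_le_mul u v
  rw [Real.coe_toNNReal _ (by positivity)] at hcl ⊢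
  set cu := min (max ((u - t) / τ) 0) 1 with hcu
  set cv := min (max ((v - t) / τ) 0) 1 with hcv
  have h1 : dist (seg p q t τ u) (seg p q t τ v) = |cu - cv| * ‖q - p‖ := by
    simp only [seg, ← hcu, ← hcv]
    rw [dist_add_left, dist_eq_norm, ← sub_smul, norm_smul, Real.norm_eq_abs]
  rw [h1]
  have h2 : dist p q = ‖q - p‖ := by rw [dist_eq_norm, norm_sub_rev]
  rw [Real.dist_eq] at hcl
  have h3 : (0:ℝ) ≤ ‖q - p‖ := norm_nonneg _
  calc |cu - cv| * ‖q - p‖ ≤ (τ⁻¹ * dist u v) * ‖q - p‖ := by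
        apply mul_le_mul_of_nonneg_right _ h3
        simpa [Real.dist_eq] using hcl
    _ = dist p q / τ * dist u v := by rw [h2]; ring

lemma seg_deriv_mid {n : ℕ} {p q : En n} {t τ : ℝ} (hτ : 0 < τ) {u : ℝ}
    (hu : u ∈ Set.Ioo t (t + τ)) : deriv (seg p q t τ) u = τ⁻¹ • (q - p) := by
  have hev : seg p q t τ =ᶠ[𝓝 u] fun v => p + ((v - t) / τ) • (q - p) := by
    filter_upwards [Ioo_mem_nhds hu.1 hu.2] with v hv
    have h0 : (0:ℝ) ≤ (v - t) / τ := div_nonneg (by linarith [hv.1]) hτ.le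
    have h1 : (v - t) / τ ≤ 1 := (div_le_one hτ).2 (by linarith [hv.2])
    simp [seg, max_eq_left h0, min_eq_left h1]
  rw [hev.deriv_eq]
  have h1 : HasDerivAt (fun v : ℝ => (v - t) / τ) τ⁻¹ u := by
    simpa [one_div] using ((hasDerivAt_id u).sub_const t).div_const τ
  exact ((h1.smul_const (q - p)).const_add p).deriv

lemma seg_deriv_gt {n : ℕ} {p q : En n} {t τ : ℝ} (hτ : 0 < τ) {u : ℝ}
    (hu : t + τ < u) : deriv (seg p q t τ) u = 0 := by
  have hev : seg p q t τ =ᶠ[𝓝 u] fun _ => q := by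
    filter_upwards [Ioi_mem_nhds hu] with v hv
    exact seg_of_ge hτ (le_of_lt hv)
  rw [hev.deriv_eq, deriv_const]

lemma LipschitzOnWith.weaken' {α β : Type*} [PseudoEMetricSpace α] [PseudoEMetricSpace β]
    {f : α → β} {s : Set α} {K K' : NNReal} (h : LipschitzOnWith K f s) (hK : K ≤ K') :
    LipschitzOnWith K' f s := fun x hx y hy =>
  le_trans (h hx hy) (mul_le_mul' (ENNReal.coe_le_coe.2 hK) le_rfl)

/-- Gluing two Lipschitz functions at a point where they agree. -/
lemma lipschitzOnWith_glue {n : ℕ} {f g : ℝ → En n} {K : NNReal} {t lo hi : ℝ}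
    (hf : LipschitzOnWith K f (Set.Icc lo hi)) (hg : LipschitzOnWith K g (Set.Icc lo hi))
    (ht : t ∈ Set.Icc lo hi) (hfg : f t = g t) :
    LipschitzOnWith K (fun u => if u ≤ t then f u else g u) (Set.Icc lo hi) := by
  rw [lipschitzOnWith_iff_dist_le_mul] at hf hg ⊢
  intro u hu v hv
  by_cases hut : u ≤ t <;> by_cases hvt : v ≤ t <;> simp only [hut, hvt, if_pos, if_neg, if_true,
    if_false]
  · exact hf u hu v hv
  · push_neg at hvt
    calc dist (f u) (g v) ≤ dist (f u) (f t) + dist (g t) (g v) := by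
          rw [hfg] at *; exact dist_triangle _ _ _
      _ ≤ K * dist u t + K * dist t v := add_le_add (hf u hu t ht) (hg t ht v hv)
      _ = K * (dist u t + dist t v) := by ring
      _ ≤ K * dist u v := by
          apply mul_le_mul_of_nonneg_left _ (NNReal.coe_nonneg K)
          rw [Real.dist_eq, Real.dist_eq, Real.dist_eq, abs_of_nonpos (by linarith),
            abs_of_nonpos (by linarith), abs_of_nonpos (by linarith)]
          linarith
  · push_neg at hut
    calc dist (g u) (f v) ≤ dist (g u) (g t) + dist (f t) (f v) := by
          rw [hfg] at *; exact dist_triangle _ _ _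
      _ ≤ K * dist u t + K * dist t v := add_le_add (hg u hu t ht) (hf t ht v hv)
      _ = K * (dist u t + dist t v) := by ring
      _ ≤ K * dist u v := by
          apply mul_le_mul_of_nonneg_left _ (NNReal.coe_nonneg K)
          rw [Real.dist_eq, Real.dist_eq, Real.dist_eq, abs_of_nonneg (by linarith),
            abs_of_nonneg (by linarith), abs_of_nonneg (by linarith)]
          linarith
  · exact hg u hu v hv

lemma intervalIntegrable_F_curve {n : ℕ} (F : En n → Pn n → ℝ) {M : ℝ}
    (hM : ∀ (x : En n) (μ : Pn n), |F x μ| ≤ M)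
    (hFx : ∀ μ : Pn n, Continuous fun x => F x μ)
    (hFm : ∀ x : En n, Continuous fun μ : Pn n => F x μ)
    {T a b : ℝ} {y : ℝ → En n} {w : ℝ → Pn n}
    (hy : ContinuousOn y (Set.Icc 0 T)) (hw : ContinuousOn w (Set.Icc 0 T))
    (hab : Set.uIoc a b ⊆ Set.Icc 0 T) :
    IntervalIntegrable (fun u => F (y u) (w u)) volume a b := by
  rw [intervalIntegrable_iff]
  have hmeas := aemeasurable_F_curve F hFx hFm measurableSet_Icc hy hw
  have hmeas' : AEMeasurable (fun u => F (y u) (w u)) (volume.restrict (Set.uIoc a b)) :=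
    hmeas.mono_measure (Measure.restrict_mono hab le_rfl)
  refine ⟨hmeas'.aestronglyMeasurable,
    HasFiniteIntegral.restrict_of_bounded (C := M) measure_Ioc_lt_top ?_⟩
  filter_upwards with u
  simpa [Real.norm_eq_abs] using hM (y u) (w u)

lemma intervalIntegrable_kinetic {n : ℕ} {y : ℝ → En n} {K : NNReal} {T a b : ℝ}
    (hy : LipschitzOnWith K y (Set.Icc 0 T)) (hab : Set.uIoc a b ⊆ Set.Icc 0 T) :
    IntervalIntegrable (fun u => ‖deriv y u‖ ^ 2 / 2) volume a b := by
  rw [intervalIntegrable_iff]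
  have hmeas : Measurable fun u : ℝ => ‖deriv y u‖ ^ 2 / 2 :=
    (((measurable_deriv y).norm).pow_const 2).div_const 2
  refine ⟨hmeas.aestronglyMeasurable,
    HasFiniteIntegral.restrict_of_bounded (C := (K : ℝ) ^ 2 / 2) measure_Ioc_lt_top ?_⟩
  have h0 : ∀ᵐ u : ℝ ∂volume.restrict (Set.uIoc a b), u ≠ 0 :=
    ae_restrict_of_ae (by rw [ae_iff]; simp [Classical.not_not])
  have hTne : ∀ᵐ u : ℝ ∂volume.restrict (Set.uIoc a b), u ≠ T :=
    ae_restrict_of_ae (by rw [ae_iff]; simp [Classical.not_not])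
  filter_upwards [ae_restrict_mem measurableSet_uIoc, h0, hTne] with u hu hu0 huT
  have huI : u ∈ Set.Ioo (0:ℝ) T := by
    have := hab hu
    exact ⟨lt_of_le_of_ne this.1 (Ne.symm hu0), lt_of_le_of_ne this.2 huT⟩
  have hd : ‖deriv y u‖ ≤ (K : ℝ) := norm_deriv_le_of_lipschitzOn (Icc_mem_nhds huI.1 huI.2) hy
  rw [Real.norm_eq_abs, abs_of_nonneg (by positivity)]
  have h2 : ‖deriv y u‖ ^ 2 ≤ (K : ℝ) ^ 2 := by nlinarith [norm_nonneg (deriv y u)]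
  linarith

lemma exists_mem_msupp_of_ne_zero {n : ℕ} (μ : Pn n) {s : Set (En n)}
    (h : μ.toMeasure s ≠ 0) : ∃ x ∈ s, x ∈ msupp μ := by
  by_contra hc
  push_neg at hc
  apply h
  set B : Set (Set (En n)) :=
    {B ∈ TopologicalSpace.countableBasis (En n) | μ.toMeasure B = 0} with hB
  have hsub : s ⊆ ⋃ b ∈ B, b := by
    intro x hx
    have hex : ∃ U ∈ 𝓝 x, μ.toMeasure U = 0 := by
      have := hc x hx
      simp only [msupp, Set.mem_setOf_eq, not_forall] at this
      obtain ⟨U, hU, h0⟩ := this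
      exact ⟨U, hU, Classical.not_not.1 h0⟩
    obtain ⟨U, hU, hU0⟩ := hex
    obtain ⟨b, hb, hxb, hbU⟩ :=
      (TopologicalSpace.isBasis_countableBasis (En n)).mem_nhds_iff.1 hU
    refine Set.mem_biUnion (show b ∈ B from ⟨hb, le_antisymm ?_ (by positivity)⟩) hxb
    exact hU0 ▸ measure_mono hbU
  refine le_antisymm ?_ (by positivity)
  calc μ.toMeasure s ≤ μ.toMeasure (⋃ b ∈ B, b) := measure_mono hsub
    _ = 0 := (measure_biUnion_null_iff
        ((TopologicalSpace.countable_countableBasis (En n)).mono (Set.sep_subset _ _))).2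
        fun b hb => hb.2

set_option maxHeartbeats 2000000 in
/-- **Asymptotic concentration of the equilibrium measures and flows near `𝒜`.**
Under the standing assumptions (bounded `F` continuous in each variable, a common minimizing
set `𝒜` with `argmin F(·,μ) = 𝒜` for every `μ`, the lower bound `F(z,μ) − c(μ) ≥ γ(r)` for
`dist(z,𝒜) > r`, and equilibria `(m^T, Φ^T)` for `T > 1` with uniformly `χ'`-Lipschitz optimal
trajectories), for every `s₀ ∈ (0,1]`:
`sup_{s∈[s₀,1]} sup_{x ∈ supp m^T(sT)} dist(x,𝒜) → 0` and
`dist(Φ^T(x,sT),𝒜) → 0` as `T → ∞`, uniformly for `x ∈ K₀` and `s ∈ [s₀,1]`. -/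
theorem equilibrium_measures_concentrate {n : ℕ} (F : En n → Pn n → ℝ)
    (M : ℝ) (hM : ∀ (x : En n) (μ : Pn n), |F x μ| ≤ M)
    (hFx : ∀ μ : Pn n, Continuous fun x => F x μ)
    (hFm : ∀ x : En n, Continuous fun μ : Pn n => F x μ)
    (𝒜 : Set (En n)) (hA_ne : 𝒜.Nonempty) (hA_closed : IsClosed 𝒜)
    (hargmin : ∀ μ : Pn n, {z : En n | ∀ w : En n, F z μ ≤ F w μ} = 𝒜)
    (γ : ℝ → ℝ) (hγ_pos : ∀ r : ℝ, 0 < r → 0 < γ r)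
    (hγ : ∀ r : ℝ, 0 < r → ∀ (z : En n) (μ : Pn n),
      r < Metric.infDist z 𝒜 → γ r ≤ F z μ - cmin F μ)
    (K₀ : Set (En n)) (hK₀ : IsCompact K₀)
    (m₀ : Pn n) (hm₀ : msupp m₀ ⊆ K₀)
    (m : ℝ → ℝ → Pn n) (Φ : ℝ → En n → ℝ → En n)
    (heq : ∀ T : ℝ, 1 < T → IsEquilibrium F K₀ m₀ T (m T) (Φ T))
    (χ' : ℝ) (hχ' : 0 < χ')
    (hLip : ∀ T : ℝ, 1 < T → ∀ x ∈ K₀,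
      LipschitzOnWith (Real.toNNReal χ') (Φ T x) (Set.Icc 0 T)) :
    ∀ s₀ ∈ Set.Ioc (0:ℝ) 1, ∀ ε : ℝ, 0 < ε → ∃ T₁ : ℝ,
      ∀ T : ℝ, T₁ ≤ T → 1 < T → ∀ s ∈ Set.Icc s₀ 1,
        (∀ x ∈ msupp (m T (s * T)), Metric.infDist x 𝒜 ≤ ε) ∧
        (∀ x ∈ K₀, Metric.infDist (Φ T x (s * T)) 𝒜 ≤ ε) := by
  intro s₀ hs₀ ε hε
  classical
  obtain ⟨a, ha⟩ := hA_ne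
  have hM0 : 0 ≤ M := by
    have := hM a ⟨Measure.dirac a, Measure.dirac.isProbabilityMeasure⟩
    exact le_trans (abs_nonneg _) this
  obtain ⟨R, hR⟩ := hK₀.isBounded.subset_closedBall a
  set R' : ℝ := max R 0 with hR'def
  set C₀ : ℝ := R' ^ 2 / 2 + 2 * M with hC₀def
  have hC₀0 : 0 ≤ C₀ := by
    have : (0:ℝ) ≤ R' ^ 2 := sq_nonneg _
    rw [hC₀def]; linarith
  set c : ℝ := γ (ε / 2) * (ε / (3 * χ')) with hcdef
  have hcpos : 0 < c := mul_pos (hγ_pos _ (by linarith)) (by positivity)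
  set r : ℝ := min 1 (min (ε / 3) (c / (1 + 4 * M))) with hrdef
  have h14M : (0:ℝ) < 1 + 4 * M := by linarith
  have hrpos : 0 < r := lt_min one_pos (lt_min (by linarith) (by positivity))
  have hr1 : r ≤ 1 := min_le_left _ _
  have hrε : r ≤ ε / 3 := le_trans (min_le_right _ _) (min_le_left _ _)
  have hrc : r * (1 / 2 + 2 * M) ≤ c / 2 := by
    have h1 : r ≤ c / (1 + 4 * M) := le_trans (min_le_right _ _) (min_le_right _ _)
    rw [le_div_iff₀ h14M] at h1
    nlinarith
  have hγr : 0 < γ r := hγ_pos r hrpos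
  have hs₀pos : 0 < s₀ := hs₀.1
  refine ⟨max 2 (2 * (C₀ + 1) / (γ r * s₀)), fun T hT₁ hT1 s hs => ?_⟩
  have hT2 : (2:ℝ) ≤ T := le_trans (le_max_left _ _) hT₁
  have hT0 : (0:ℝ) < T := by linarith
  obtain ⟨hms, hopt, hpush⟩ := heq T hT1
  have hss : s₀ ≤ s := hs.1
  have hs1 : s ≤ 1 := hs.2
  have hspos : 0 < s := lt_of_lt_of_le hs₀pos hss
  have hsTmem : s * T ∈ Set.Icc (0:ℝ) T := ⟨mul_nonneg hspos.le hT0.le, by nlinarith⟩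
  -- cmin facts
  have hbdd : ∀ μ : Pn n, BddBelow (Set.range fun z => F z μ) := fun μ =>
    ⟨-M, by rintro v ⟨z, rfl⟩; linarith [(abs_le.1 (hM z μ)).1]⟩
  have hcm_le : ∀ (μ : Pn n) (z : En n), cmin F μ ≤ F z μ := fun μ z => ciInf_le (hbdd μ) z
  have hcm_eq : ∀ (μ : Pn n) (b : En n), b ∈ 𝒜 → cmin F μ = F b μ := by
    intro μ b hb
    rw [← hargmin μ] at hb
    exact le_antisymm (hcm_le μ b) (le_ciInf hb)
  -- the main pointwise claim
  have part2 : ∀ x ∈ K₀, Metric.infDist (Φ T x (s * T)) 𝒜 ≤ ε := by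
    intro x hx
    by_contra hcon
    push_neg at hcon
    set φ : ℝ → En n := Φ T x with hφdef
    set w : ℝ → Pn n := m T with hwdef
    have hφLip : LipschitzOnWith (Real.toNNReal χ') φ (Set.Icc 0 T) := hLip T hT1 x hx
    have hφcont : ContinuousOn φ (Set.Icc 0 T) := hφLip.continuousOn
    have hwcont : ContinuousOn w (Set.Icc 0 T) := hms
    have hφ0 : φ 0 = x := (hopt x hx).1.2
    set cmf : ℝ → ℝ := fun u => F a (w u) with hcmfdef
    have hcmf_eq : ∀ u, cmf u = cmin F (w u) := fun u => (hcm_eq (w u) a ha).symm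
    have hcmf_cont : ContinuousOn cmf (Set.Icc 0 T) := (hFm a).comp_continuousOn hwcont
    have hcmf_bound : ∀ u, -M ≤ cmf u ∧ cmf u ≤ M := fun u => abs_le.1 (hM a (w u))
    -- integrability package
    have hsub : ∀ {α β : ℝ}, α ∈ Set.Icc (0:ℝ) T → β ∈ Set.Icc (0:ℝ) T →
        Set.uIoc α β ⊆ Set.Icc 0 T := by
      intro α β hα hβ u hu
      exact ⟨le_trans (le_min hα.1 hβ.1) hu.1.le, le_trans hu.2 (max_le hα.2 hβ.2)⟩
    have hII : ∀ (y : ℝ → En n) (L : NNReal), LipschitzOnWith L y (Set.Icc 0 T) →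
        ∀ α β, α ∈ Set.Icc (0:ℝ) T → β ∈ Set.Icc (0:ℝ) T →
        IntervalIntegrable (fun u => F (y u) (w u)) volume α β ∧
        IntervalIntegrable (fun u => ‖deriv y u‖ ^ 2 / 2 + F (y u) (w u)) volume α β := by
      intro y L hL α β hα hβ
      have hF := intervalIntegrable_F_curve F hM hFx hFm hL.continuousOn hwcont (hsub hα hβ)
      exact ⟨hF, (intervalIntegrable_kinetic hL (hsub hα hβ)).add hF⟩
    have hIcmf : ∀ α β, α ∈ Set.Icc (0:ℝ) T → β ∈ Set.Icc (0:ℝ) T →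
        IntervalIntegrable cmf volume α β := by
      intro α β hα hβ
      apply ContinuousOn.intervalIntegrable
      apply hcmf_cont.mono
      intro u hu
      exact ⟨le_trans (le_min hα.1 hβ.1) hu.1, le_trans hu.2 (max_le hα.2 hβ.2)⟩
    have hIsub : ∀ α β, α ∈ Set.Icc (0:ℝ) T → β ∈ Set.Icc (0:ℝ) T →
        IntervalIntegrable (fun u => F (φ u) (w u) - cmf u) volume α β := by
      intro α β hα hβ
      exact ((hII φ _ hφLip α β hα hβ).1).sub (hIcmf α β hα hβ)
    have hT_mem : T ∈ Set.Icc (0:ℝ) T := ⟨by linarith, le_rfl⟩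
    have h0_mem : (0:ℝ) ∈ Set.Icc (0:ℝ) T := ⟨le_rfl, by linarith⟩
    -- pointwise nonnegativity of excess
    have hexc_nonneg : ∀ u, 0 ≤ F (φ u) (w u) - cmf u := by
      intro u
      rw [hcmf_eq u]
      linarith [hcm_le (w u) (φ u)]
    -- Energy estimate
    have energy : ∀ (t τ : ℝ) (b : En n), b ∈ 𝒜 → t ∈ Set.Icc (0:ℝ) T → 0 < τ → t + τ ≤ T →
        ∫ u in t..T, (F (φ u) (w u) - cmf u) ≤
          (dist (φ t) b) ^ 2 / (2 * τ) + 2 * M * τ := by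
      intro t τ b hb ht hτ htτ
      set p : En n := φ t with hpdef
      set y₂ : ℝ → En n := fun u => if u ≤ t then φ u else seg p b t τ u with hy₂def
      have hseglip : LipschitzWith (Real.toNNReal (dist p b / τ)) (seg p b t τ) :=
        seg_lipschitz p b t τ hτ
      have hsegon : LipschitzOnWith (Real.toNNReal (dist p b / τ)) (seg p b t τ)
          (Set.Icc 0 T) := hseglip.lipschitzOnWith
      set K₂ : NNReal := Real.toNNReal χ' ⊔ Real.toNNReal (dist p b / τ) with hK₂def
      have hy₂lip : LipschitzOnWith K₂ y₂ (Set.Icc 0 T) := by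
        apply lipschitzOnWith_glue (hφLip.weaken' le_sup_left)
          (hsegon.weaken' le_sup_right) ht
        exact (seg_of_le hτ le_rfl).symm
      have hy₂0 : y₂ 0 = x := by
        rw [hy₂def]
        simp only [if_pos ht.1]
        exact hφ0
      have hopt2 := (hopt x hx).2 y₂ ⟨⟨K₂, hy₂lip⟩, hy₂0⟩
      rw [action, action] at hopt2
      have htτ_mem : t + τ ∈ Set.Icc (0:ℝ) T := ⟨by linarith [ht.1], htτ⟩
      obtain ⟨hIφF_tT, hIφA_tT⟩ := hII φ _ hφLip t T ht hT_mem
      obtain ⟨hIφF_0t, hIφA_0t⟩ := hII φ _ hφLip 0 t h0_mem ht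
      obtain ⟨hI₂F_0t, hI₂A_0t⟩ := hII y₂ _ hy₂lip 0 t h0_mem ht
      obtain ⟨hI₂F_tm, hI₂A_tm⟩ := hII y₂ _ hy₂lip t (t+τ) ht htτ_mem
      obtain ⟨hI₂F_mT, hI₂A_mT⟩ := hII y₂ _ hy₂lip (t+τ) T htτ_mem hT_mem
      obtain ⟨hI₂F_tT, hI₂A_tT⟩ := hII y₂ _ hy₂lip t T ht hT_mem
      -- the two curves agree on [0,t]
      have hstepc : ∫ u in (0:ℝ)..t, (‖deriv y₂ u‖ ^ 2 / 2 + F (y₂ u) (w u)) =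
          ∫ u in (0:ℝ)..t, (‖deriv φ u‖ ^ 2 / 2 + F (φ u) (w u)) := by
        apply intervalIntegral.integral_congr_ae
        have hne : ∀ᵐ u : ℝ, u ≠ t := by rw [ae_iff]; simp [Classical.not_not]
        filter_upwards [hne] with u hune hu
        rw [Set.uIoc_of_le ht.1] at hu
        have hult : u < t := lt_of_le_of_ne hu.2 hune
        have hyeq : y₂ u = φ u := by rw [hy₂def]; simp [hu.2]
        have hdeq : deriv y₂ u = deriv φ u := by
          apply Filter.EventuallyEq.deriv_eq
          filter_upwards [Iio_mem_nhds hult] with v hv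
          have hvt : v ≤ t := le_of_lt (Set.mem_Iio.1 hv)
          simp only [hy₂def]
          simp [hvt]
        rw [hyeq, hdeq]
      have hsplitφ := intervalIntegral.integral_add_adjacent_intervals hIφA_0t hIφA_tT
      have hsplit₂ := intervalIntegral.integral_add_adjacent_intervals hI₂A_0t hI₂A_tT
      have hmain : ∫ u in t..T, (‖deriv φ u‖ ^ 2 / 2 + F (φ u) (w u)) ≤
          ∫ u in t..T, (‖deriv y₂ u‖ ^ 2 / 2 + F (y₂ u) (w u)) := by
        rw [← hsplitφ, ← hsplit₂, hstepc] at hopt2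
        linarith only [hopt2]
      have hlow : ∫ u in t..T, F (φ u) (w u) ≤
          ∫ u in t..T, (‖deriv φ u‖ ^ 2 / 2 + F (φ u) (w u)) := by
        apply intervalIntegral.integral_mono_on ht.2 hIφF_tT hIφA_tT
        intro u _
        have : (0:ℝ) ≤ ‖deriv φ u‖ ^ 2 / 2 := by positivity
        linarith
      have hsplit₂' := intervalIntegral.integral_add_adjacent_intervals hI₂A_tm hI₂A_mT
      -- tail equals cmf
      have htail : ∫ u in (t+τ)..T, (‖deriv y₂ u‖ ^ 2 / 2 + F (y₂ u) (w u)) =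
          ∫ u in (t+τ)..T, cmf u := by
        apply intervalIntegral.integral_congr_ae
        filter_upwards with u hu
        rw [Set.uIoc_of_le htτ] at hu
        have h1 : y₂ u = b := by
          simp only [hy₂def]
          rw [if_neg (not_le.2 (by linarith [hu.1]))]
          exact seg_of_ge hτ (le_of_lt hu.1)
        have h2 : deriv y₂ u = 0 := by
          have hev : y₂ =ᶠ[𝓝 u] fun _ => b := by
            filter_upwards [Ioi_mem_nhds hu.1] with v hv
            have hv' : t + τ < v := Set.mem_Ioi.1 hv
            simp only [hy₂def]
            rw [if_neg (not_le.2 (by linarith))]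
            exact seg_of_ge hτ (le_of_lt hv')
          rw [hev.deriv_eq, deriv_const]
        rw [h1, h2]
        have h3 : cmf u = F b (w u) := by rw [hcmf_eq u, hcm_eq (w u) b hb]
        rw [h3]
        simp
      -- middle piece bound
      have hmid : ∫ u in t..(t+τ), (‖deriv y₂ u‖ ^ 2 / 2 + F (y₂ u) (w u)) ≤
          τ * ((dist p b) ^ 2 / (2 * τ ^ 2) + M) := by
        have hconst : ∫ _ in t..(t+τ), ((dist p b) ^ 2 / (2 * τ ^ 2) + M) =
            τ * ((dist p b) ^ 2 / (2 * τ ^ 2) + M) := by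
          rw [intervalIntegral.integral_const, smul_eq_mul, add_sub_cancel_left]
        rw [← hconst]
        apply intervalIntegral.integral_mono_ae_restrict (by linarith) hI₂A_tm
          intervalIntegrable_const
        have hne1 : ∀ᵐ u : ℝ ∂volume.restrict (Set.Icc t (t+τ)), u ≠ t :=
          ae_restrict_of_ae (by rw [ae_iff]; simp [Classical.not_not])
        have hne2 : ∀ᵐ u : ℝ ∂volume.restrict (Set.Icc t (t+τ)), u ≠ t + τ :=
          ae_restrict_of_ae (by rw [ae_iff]; simp [Classical.not_not])
        filter_upwards [ae_restrict_mem measurableSet_Icc, hne1, hne2] with u hu h1 h2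
        have huI : u ∈ Set.Ioo t (t+τ) :=
          ⟨lt_of_le_of_ne hu.1 (Ne.symm h1), lt_of_le_of_ne hu.2 h2⟩
        have hder : deriv y₂ u = τ⁻¹ • (b - p) := by
          have hev : y₂ =ᶠ[𝓝 u] seg p b t τ := by
            filter_upwards [Ioi_mem_nhds huI.1] with v hv
            have hv' : t < v := Set.mem_Ioi.1 hv
            simp only [hy₂def]
            rw [if_neg (not_le.2 hv')]
          rw [hev.deriv_eq, seg_deriv_mid hτ huI]
        have hnder : ‖deriv y₂ u‖ ^ 2 = (dist p b) ^ 2 / τ ^ 2 := by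
          rw [hder, norm_smul, norm_inv, Real.norm_eq_abs, abs_of_pos hτ]
          rw [show dist p b = ‖b - p‖ by rw [dist_eq_norm, norm_sub_rev]]
          field_simp
        have hFb : F (y₂ u) (w u) ≤ M := (abs_le.1 (hM (y₂ u) (w u))).2
        rw [hnder]
        have : (dist p b) ^ 2 / τ ^ 2 / 2 = (dist p b) ^ 2 / (2 * τ ^ 2) := by ring
        linarith
      -- cmf bounds on middle
      have hcmf_mid : -(M * τ) ≤ ∫ u in t..(t+τ), cmf u := by
        have hconst : ∫ _ in t..(t+τ), (-M : ℝ) = -(M * τ) := by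
          rw [intervalIntegral.integral_const, smul_eq_mul, add_sub_cancel_left]
          ring
        rw [← hconst]
        apply intervalIntegral.integral_mono_on (by linarith) intervalIntegrable_const
          (hIcmf t (t+τ) ht htτ_mem)
        intro u _
        exact (hcmf_bound u).1
      -- combine
      have hsubint : ∫ u in t..T, (F (φ u) (w u) - cmf u) =
          (∫ u in t..T, F (φ u) (w u)) - ∫ u in t..T, cmf u :=
        intervalIntegral.integral_sub hIφF_tT (hIcmf t T ht hT_mem)
      have hsplitcmf := intervalIntegral.integral_add_adjacent_intervals
        (hIcmf t (t+τ) ht htτ_mem) (hIcmf (t+τ) T htτ_mem hT_mem)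
      have harith : τ * ((dist p b) ^ 2 / (2 * τ ^ 2) + M) =
          (dist p b) ^ 2 / (2 * τ) + M * τ := by
        field_simp
      rw [hsubint, ← hsplitcmf]
      have hfin : ∫ u in t..T, F (φ u) (w u) ≤
          (dist p b) ^ 2 / (2 * τ) + M * τ + ∫ u in (t+τ)..T, cmf u := by
        calc ∫ u in t..T, F (φ u) (w u)
            ≤ ∫ u in t..T, (‖deriv φ u‖ ^ 2 / 2 + F (φ u) (w u)) := hlow
          _ ≤ ∫ u in t..T, (‖deriv y₂ u‖ ^ 2 / 2 + F (y₂ u) (w u)) := hmain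
          _ = (∫ u in t..(t+τ), (‖deriv y₂ u‖ ^ 2 / 2 + F (y₂ u) (w u))) +
              ∫ u in (t+τ)..T, (‖deriv y₂ u‖ ^ 2 / 2 + F (y₂ u) (w u)) := hsplit₂'.symm
          _ ≤ τ * ((dist p b) ^ 2 / (2 * τ ^ 2) + M) + ∫ u in (t+τ)..T, cmf u := by
              rw [htail]; linarith only [hmid]
          _ = (dist p b) ^ 2 / (2 * τ) + M * τ + ∫ u in (t+τ)..T, cmf u := by rw [harith]
      linarith only [hfin, hcmf_mid]
    -- global energy bound
    have hglob : ∫ u in (0:ℝ)..T, (F (φ u) (w u) - cmf u) ≤ C₀ := by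
      have h1 := energy 0 1 a ha h0_mem one_pos (by linarith)
      have h2 : dist (φ 0) a ≤ R' := by
        rw [hφ0]
        exact le_trans (hR hx) (le_max_left _ _)
      have h3 : (dist (φ 0) a) ^ 2 ≤ R' ^ 2 := by nlinarith [dist_nonneg (x := φ 0) (y := a)]
      calc ∫ u in (0:ℝ)..T, (F (φ u) (w u) - cmf u)
          ≤ (dist (φ 0) a) ^ 2 / (2 * 1) + 2 * M * 1 := h1
        _ ≤ C₀ := by rw [hC₀def]; linarith
    -- a good time exists in [0, s₀T/2]
    set σ : ℝ := s₀ * T / 2 with hσdef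
    have hσ_mem : σ ∈ Set.Icc (0:ℝ) T := ⟨by positivity, by nlinarith [hs₀.2]⟩
    have hgood : ∃ t ∈ Set.Icc (0:ℝ) σ, Metric.infDist (φ t) 𝒜 ≤ r := by
      by_contra hcg
      push_neg at hcg
      have hlb : γ r * σ ≤ ∫ u in (0:ℝ)..σ, (F (φ u) (w u) - cmf u) := by
        have hconst : ∫ _ in (0:ℝ)..σ, γ r = γ r * σ := by
          rw [intervalIntegral.integral_const, smul_eq_mul, sub_zero, mul_comm]
        rw [← hconst]
        apply intervalIntegral.integral_mono_on hσ_mem.1 intervalIntegrable_const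
          (hIsub 0 σ h0_mem hσ_mem)
        intro u hu
        have := hγ r hrpos (φ u) (w u) (hcg u hu)
        rw [hcmf_eq u]
        linarith
      have hup : ∫ u in (0:ℝ)..σ, (F (φ u) (w u) - cmf u) ≤ C₀ := by
        have hsplit := intervalIntegral.integral_add_adjacent_intervals
          (hIsub 0 σ h0_mem hσ_mem) (hIsub σ T hσ_mem hT_mem)
        have htail0 : 0 ≤ ∫ u in σ..T, (F (φ u) (w u) - cmf u) :=
          intervalIntegral.integral_nonneg hσ_mem.2 (fun u _ => hexc_nonneg u)
        linarith
      have hT₁' : 2 * (C₀ + 1) / (γ r * s₀) ≤ T := le_trans (le_max_right _ _) hT₁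
      rw [div_le_iff₀ (by positivity)] at hT₁'
      have : C₀ + 1 ≤ γ r * σ := by rw [hσdef]; nlinarith
      linarith
    obtain ⟨t, htmem, htgood⟩ := hgood
    obtain ⟨b, hbA, hbd⟩ := hA_closed.exists_infDist_eq_dist ⟨a, ha⟩ (φ t)
    have htIcc : t ∈ Set.Icc (0:ℝ) T := ⟨htmem.1, le_trans htmem.2 hσ_mem.2⟩
    have htT2 : t ≤ T / 2 := by
      have := htmem.2
      rw [hσdef] at this
      nlinarith [hs₀.2]
    have htr : t + r ≤ T := by linarith
    -- local energy bound
    have hloc : ∫ u in t..T, (F (φ u) (w u) - cmf u) ≤ c / 2 := by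
      have h1 := energy t r b hbA htIcc hrpos htr
      have h2 : dist (φ t) b ≤ r := by rw [← hbd]; exact htgood
      have h3 : (dist (φ t) b) ^ 2 ≤ r ^ 2 := by nlinarith [dist_nonneg (x := φ t) (y := b)]
      have h4 : (dist (φ t) b) ^ 2 / (2 * r) ≤ r / 2 := by
        rw [div_le_iff₀ (by positivity)]
        nlinarith
      calc ∫ u in t..T, (F (φ u) (w u) - cmf u)
          ≤ (dist (φ t) b) ^ 2 / (2 * r) + 2 * M * r := h1
        _ ≤ r * (1 / 2 + 2 * M) := by linarith [h4]
        _ ≤ c / 2 := hrc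
    -- excursion contradiction
    set u₀ : ℝ := s * T with hu₀def
    have hu₀mem : u₀ ∈ Set.Icc (0:ℝ) T := hsTmem
    have htu₀ : t ≤ u₀ := by
      have h1 : σ ≤ u₀ := by rw [hσdef, hu₀def]; nlinarith
      linarith [htmem.2]
    set g : ℝ → ℝ := fun u => Metric.infDist (φ u) 𝒜 with hgdef
    have hgLip : LipschitzOnWith (Real.toNNReal χ') g (Set.Icc 0 T) := by
      have h := (lipschitz_infDist_pt 𝒜).comp_lipschitzOnWith hφLip
      rw [one_mul] at h
      exact h
    have hgcont : ContinuousOn g (Set.Icc 0 T) := hgLip.continuousOn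
    set S : Set ℝ := {v | v ∈ Set.Icc t u₀ ∧ g v ≤ 2 * ε / 3} with hSdef
    have hSne : S.Nonempty := ⟨t, ⟨le_rfl, htu₀⟩, by
      show g t ≤ 2 * ε / 3
      calc g t ≤ r := htgood
        _ ≤ ε / 3 := hrε
        _ ≤ 2 * ε / 3 := by linarith⟩
    have hSbdd : BddAbove S := ⟨u₀, fun v hv => hv.1.2⟩
    have hIccsub : Set.Icc t u₀ ⊆ Set.Icc (0:ℝ) T :=
      Set.Icc_subset_Icc htIcc.1 hu₀mem.2
    have hSclosed : IsClosed S := by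
      have hrw : S = Set.Icc t u₀ ∩ g ⁻¹' (Set.Iic (2 * ε / 3)) := by
        ext v
        simp [hSdef, Set.mem_Iic, Set.mem_setOf_eq]
      rw [hrw]
      exact (hgcont.mono hIccsub).preimage_isClosed_of_isClosed isClosed_Icc isClosed_Iic
    set u₁ : ℝ := sSup S with hu₁def
    have hu₁S : u₁ ∈ S := hSclosed.csSup_mem hSne hSbdd
    have hgu₁ : g u₁ ≤ 2 * ε / 3 := hu₁S.2
    have hu₁mem : u₁ ∈ Set.Icc t u₀ := hu₁S.1
    have hgu₀ : ε < g u₀ := hcon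
    have hu₁lt : u₁ < u₀ := by
      rcases lt_or_eq_of_le hu₁mem.2 with h | h
      · exact h
      · rw [h] at hgu₁; linarith
    -- length of the excursion
    have hlen : ε / (3 * χ') ≤ u₀ - u₁ := by
      have hd := hgLip.dist_le_mul u₀ (hIccsub ⟨htu₀, le_rfl⟩) u₁ (hIccsub hu₁mem)
      rw [Real.dist_eq, Real.dist_eq, Real.coe_toNNReal _ hχ'.le] at hd
      have h1 : |g u₀ - g u₁| ≥ ε / 3 := by
        rw [abs_of_nonneg (by linarith)]
        linarith
      have h2 : |u₀ - u₁| = u₀ - u₁ := abs_of_nonneg (by linarith)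
      rw [h2] at hd
      rw [div_le_iff₀ (by positivity)]
      nlinarith
    -- the excursion costs at least c
    have hbig : c ≤ ∫ u in u₁..u₀, (F (φ u) (w u) - cmf u) := by
      have hu₁Icc : u₁ ∈ Set.Icc (0:ℝ) T := hIccsub hu₁mem
      have hconst : ∫ _ in u₁..u₀, γ (ε / 2) = (u₀ - u₁) * γ (ε / 2) := by
        rw [intervalIntegral.integral_const, smul_eq_mul]
      have hmono : ∫ _ in u₁..u₀, γ (ε / 2) ≤ ∫ u in u₁..u₀, (F (φ u) (w u) - cmf u) := by
        apply intervalIntegral.integral_mono_ae_restrict hu₁lt.le intervalIntegrable_const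
          (hIsub u₁ u₀ hu₁Icc hu₀mem)
        have hne : ∀ᵐ u : ℝ ∂volume.restrict (Set.Icc u₁ u₀), u ≠ u₁ :=
          ae_restrict_of_ae (by rw [ae_iff]; simp [Classical.not_not])
        filter_upwards [ae_restrict_mem measurableSet_Icc, hne] with u hu hune
        have huIoc : u₁ < u := lt_of_le_of_ne hu.1 (Ne.symm hune)
        have hgub : 2 * ε / 3 < g u := by
          by_contra hgu
          push_neg at hgu
          have huS : u ∈ S := ⟨⟨le_trans hu₁mem.1 huIoc.le, hu.2⟩, hgu⟩
          have := le_csSup hSbdd huS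
          rw [← hu₁def] at this
          linarith
        have hdist : ε / 2 < Metric.infDist (φ u) 𝒜 := by
          have : ε / 2 < 2 * ε / 3 := by linarith
          exact lt_trans this hgub
        have := hγ (ε / 2) (by linarith) (φ u) (w u) hdist
        rw [hcmf_eq u]
        linarith
      calc c = γ (ε / 2) * (ε / (3 * χ')) := hcdef
        _ ≤ γ (ε / 2) * (u₀ - u₁) :=
            mul_le_mul_of_nonneg_left hlen (hγ_pos _ (by linarith)).le
        _ = (u₀ - u₁) * γ (ε / 2) := by ring
        _ = ∫ _ in u₁..u₀, γ (ε / 2) := hconst.symm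
        _ ≤ _ := hmono
    -- but the excursion budget is at most c/2
    have hsmall : ∫ u in u₁..u₀, (F (φ u) (w u) - cmf u) ≤ c / 2 := by
      have hu₁Icc : u₁ ∈ Set.Icc (0:ℝ) T := hIccsub hu₁mem
      have hs1' := intervalIntegral.integral_add_adjacent_intervals
        (hIsub t u₁ htIcc hu₁Icc) (hIsub u₁ u₀ hu₁Icc hu₀mem)
      have hs2' := intervalIntegral.integral_add_adjacent_intervals
        ((hIsub t u₁ htIcc hu₁Icc).trans (hIsub u₁ u₀ hu₁Icc hu₀mem))
        (hIsub u₀ T hu₀mem hT_mem)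
      have hpos1 : 0 ≤ ∫ u in t..u₁, (F (φ u) (w u) - cmf u) :=
        intervalIntegral.integral_nonneg hu₁mem.1 (fun u _ => hexc_nonneg u)
      have hpos2 : 0 ≤ ∫ u in u₀..T, (F (φ u) (w u) - cmf u) :=
        intervalIntegral.integral_nonneg hu₀mem.2 (fun u _ => hexc_nonneg u)
      have : (∫ u in t..u₁, (F (φ u) (w u) - cmf u)) +
          (∫ u in u₁..u₀, (F (φ u) (w u) - cmf u)) +
          (∫ u in u₀..T, (F (φ u) (w u) - cmf u)) =
          ∫ u in t..T, (F (φ u) (w u) - cmf u) := by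
        rw [hs1', hs2']
      linarith [hloc]
    linarith
  refine ⟨?_, part2⟩
  -- part 1 : support of the measure
  intro x hx
  have hmap := hpush (s * T) hsTmem
  have haem : AEMeasurable (fun z => Φ T z (s * T)) m₀.toMeasure := by
    by_contra hcm
    rw [Measure.map_of_not_aemeasurable hcm] at hmap
    have h1 : (m T (s * T)).toMeasure Set.univ = 1 := measure_univ
    rw [hmap] at h1
    simp at h1
  refine le_of_forall_pos_le_add fun δ hδ => ?_
  have hball : (m T (s * T)).toMeasure (Metric.ball x δ) ≠ 0 :=
    hx _ (Metric.ball_mem_nhds x hδ)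
  rw [hmap, Measure.map_apply_of_aemeasurable haem measurableSet_ball] at hball
  obtain ⟨x₀, hx₀pre, hx₀supp⟩ := exists_mem_msupp_of_ne_zero m₀ hball
  have hx₀K : x₀ ∈ K₀ := hm₀ hx₀supp
  calc Metric.infDist x 𝒜
      ≤ Metric.infDist (Φ T x₀ (s * T)) 𝒜 + dist x (Φ T x₀ (s * T)) :=
        Metric.infDist_le_infDist_add_dist
    _ ≤ ε + δ := by
        apply add_le_add (part2 x₀ hx₀K)
        rw [dist_comm]
        exact le_of_lt hx₀pre
end
end
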